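/- Let k ≥ 1 with r_n(k) = n, and suppose r̂_k ∈ ℂ^N satisfies p_j^H r̂_k = 0 for all 1 ≤ j ≤ k. Then for any complex parameters ω_1, …, ω_{g_n(k)}, the ML(n)BiCGStab auxiliary vector u_k := φ_{g_n(k)}(A) r̂_k satisfies q_i^H u_k = 0 for all 1 ≤ i ≤ n, i.e. u_k ⟂ span{q_1, …, q_n}. -/

import Mathlib

open Matrix Polynomial

/-- The index function `g_n(k) = ⌊(k-1)/n⌋`, rounding toward minus infinity. -/
def gIdx (n k : ℤ) : ℤ := Int.fdiv (k - 1) n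

/-- The index function `r_n(k) = k - n * g_n(k)`. -/
def rIdx (n k : ℤ) : ℤ := k - n * gIdx n k

/-- Let `k ≥ 1` with `r_n(k) = n`, and suppose `r̂_k` satisfies `p_jᴴ r̂_k = 0` for all
`1 ≤ j ≤ k`, where `p_j = (Aᴴ)^{g_n(j)} q_{r_n(j)}`.  Then for any parameters
`ω_1, …, ω_{g_n(k)}`, the ML(n)BiCGStab auxiliary vector `u_k := φ_{g_n(k)}(A) r̂_k`
satisfies `q_iᴴ u_k = 0` for all `1 ≤ i ≤ n`, where `φ_0 = 1` and
`φ_m(λ) = (1 − ω_m λ) φ_{m−1}(λ)`. -/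
theorem stmt_12 {N : ℕ} (A : Matrix (Fin N) (Fin N) ℂ) (n : ℤ) (hn : 0 < n)
    (q : ℤ → (Fin N → ℂ)) (p : ℤ → (Fin N → ℂ))
    (hp : ∀ k : ℤ, 1 ≤ k → p k = (Aᴴ ^ (gIdx n k).toNat) *ᵥ q (rIdx n k))
    (ω : ℕ → ℂ) (φ : ℕ → Polynomial ℂ)
    (hφ0 : φ 0 = 1)
    (hφ : ∀ m : ℕ, φ (m + 1) = (1 - C (ω (m + 1)) * X) * φ m)
    (k : ℤ) (hk : 1 ≤ k) (hkn : rIdx n k = n)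
    (rhat : Fin N → ℂ)
    (hv : ∀ j : ℤ, 1 ≤ j → j ≤ k → star (p j) ⬝ᵥ rhat = 0) :
    ∀ i : ℤ, 1 ≤ i → i ≤ n →
      star (q i) ⬝ᵥ ((aeval A (φ (gIdx n k).toNat)) *ᵥ rhat) = 0 := by
  intro i hi1 hin
  set g : ℤ := gIdx n k with hg
  have hg0 : 0 ≤ g := Int.fdiv_nonneg (by omega) (by omega)
  have hrk : rIdx n k = k - n * g := rfl
  have hkval : k = n * g + n := by omega
  -- core orthogonality
  have key : ∀ m : ℕ, (m : ℤ) ≤ g → star (q i) ⬝ᵥ ((A ^ m) *ᵥ rhat) = 0 := by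
    intro m hm
    set j : ℤ := (m : ℤ) * n + i with hj
    have hj1 : 1 ≤ j := by
      have : 0 ≤ (m : ℤ) * n := mul_nonneg (by positivity) (by omega)
      omega
    have hjk : j ≤ k := by nlinarith
    have hgj : gIdx n j = (m : ℤ) := by
      unfold gIdx
      rw [Int.fdiv_eq_ediv_of_nonneg _ (by omega)]
      have h1 : j - 1 = (i - 1) + (m : ℤ) * n := by omega
      rw [h1, Int.add_mul_ediv_right _ _ (by omega : n ≠ 0),
        Int.ediv_eq_zero_of_lt (by omega) (by omega)]
      ring
    have hrj : rIdx n j = i := by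
      unfold rIdx; rw [hgj, hj]; ring
    have h0 := hv j hj1 hjk
    rw [hp j hj1, hgj, hrj] at h0
    simp only [Int.toNat_natCast] at h0
    rw [Matrix.star_mulVec, ← Matrix.conjTranspose_pow,
      Matrix.conjTranspose_conjTranspose] at h0
    rwa [Matrix.dotProduct_mulVec]
  have hdeg : ∀ m : ℕ, (φ m).natDegree ≤ m := by
    intro m
    induction m with
    | zero => simp [hφ0]
    | succ m ih =>
      rw [hφ]
      refine le_trans (Polynomial.natDegree_mul_le) ?_
      have h1 : (1 - C (ω (m + 1)) * X : Polynomial ℂ).natDegree ≤ 1 := by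
        refine le_trans (Polynomial.natDegree_sub_le _ _) ?_
        simp [Polynomial.natDegree_C_mul_le]
        exact le_trans (Polynomial.natDegree_C_mul_le _ _) (by simp)
      omega
  have hdegk : (φ g.toNat).natDegree < g.toNat + 1 :=
    lt_of_le_of_lt (hdeg _) (lt_add_one _)
  rw [Polynomial.aeval_eq_sum_range' hdegk]
  have hsum : (∑ m ∈ Finset.range (g.toNat + 1), (φ g.toNat).coeff m • A ^ m) *ᵥ rhat
      = ∑ m ∈ Finset.range (g.toNat + 1), ((φ g.toNat).coeff m • A ^ m) *ᵥ rhat :=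
    map_sum (Matrix.mulVec.addMonoidHomLeft rhat) _ _
  rw [hsum]
  have hdot : ∀ s : Finset ℕ,
      star (q i) ⬝ᵥ (∑ m ∈ s, ((φ g.toNat).coeff m • A ^ m) *ᵥ rhat)
        = ∑ m ∈ s, star (q i) ⬝ᵥ (((φ g.toNat).coeff m • A ^ m) *ᵥ rhat) := by
    intro s
    induction s using Finset.induction_on with
    | empty => simp
    | insert x s hx ih => simp [Finset.sum_insert hx, dotProduct_add, ih]
  rw [hdot]
  refine Finset.sum_eq_zero fun m hm => ?_
  rw [Matrix.smul_mulVec, dotProduct_smul]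
  have hmle : (m : ℤ) ≤ g := by
    have := Finset.mem_range.mp hm
    omega
  rw [key m hmle, smul_zero]
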